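/- Let Λ₈ = b(x²+y²)∂₁∧∂₂ + (2b+c)xz∂₂∧∂₃ + (2b+c)yz∂₃∧∂₁ ± z²∂₁∧∂₂ with b(2b+c) > 0, 3b+c ≠ 0, and b/c = β/γ in lowest terms with β ∈ ℕ*, γ ∈ ℤ* and γ even when needed; then for any i ∈ ℕ with γ·i even, the function ((x²+y²) ± z²/(3b+c))^{(β+γ/2)i} · z^{β i} is a Casimir of Λ₈. -/
import Mathlib


open MvPolynomial

/-- The Poisson bracket `{f,g} = Λ(df,dg)` of the bivector on ℝ³ with components
`A23 = Λ²³`, `A31 = Λ³¹`, `A12 = Λ¹²` (coordinates `x = X 0`, `y = X 1`, `z = X 2`). -/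
noncomputable def pbr (A23 A31 A12 f g : MvPolynomial (Fin 3) ℝ) : MvPolynomial (Fin 3) ℝ :=
  A23 * (pderiv 1 f * pderiv 2 g - pderiv 2 f * pderiv 1 g)
  + A31 * (pderiv 2 f * pderiv 0 g - pderiv 0 f * pderiv 2 g)
  + A12 * (pderiv 0 f * pderiv 1 g - pderiv 1 f * pderiv 0 g)

lemma casimir_of (A23 A31 A12 F : MvPolynomial (Fin 3) ℝ)
    (h1 : A31 * pderiv 2 F = A12 * pderiv 1 F)
    (h2 : A12 * pderiv 0 F = A23 * pderiv 2 F)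
    (h3 : A23 * pderiv 1 F = A31 * pderiv 0 F) :
    ∀ f, pbr A23 A31 A12 F f = 0 := by
  intro f; unfold pbr
  linear_combination pderiv 2 f * h3 + pderiv 0 f * h1 + pderiv 1 f * h2

lemma pderiv_pow_succ (n : ℕ) (j : Fin 3) (p : MvPolynomial (Fin 3) ℝ) :
    pderiv j (p ^ (n+1)) = (C ((n:ℝ)+1)) * p^n * pderiv j p := by
  have := Derivation.leibniz_pow (pderiv (R := ℝ) j) (a := p) (n+1)
  simp only [Nat.add_sub_cancel, nsmul_eq_mul] at this
  rw [this]; simp [smul_eq_mul, map_add, map_one, map_natCast]; ring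

/-- For `Λ₈ = b(x²+y²)∂₁∧∂₂ + (2b+c)xz∂₂∧∂₃ + (2b+c)yz∂₃∧∂₁ ± z²∂₁∧∂₂` with
`b(2b+c) > 0`, `3b+c ≠ 0`, and `b/c = β/γ` in lowest terms (β ∈ ℕ*, γ ∈ ℤ*),
and `i ∈ ℕ` with `γ·i` even, the function
`((x²+y²) ± z²/(3b+c))^{(β+γ/2)i} · z^{βi}` is a Casimir of Λ₈
(the natural exponent `e` satisfies `2e = (2β+γ)i`). -/
theorem stmt19 (b c s : ℝ) (hs : s = 1 ∨ s = -1)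
    (hbc : b * (2 * b + c) > 0) (h3bc : 3 * b + c ≠ 0) (hc : c ≠ 0)
    (β : ℕ) (γ : ℤ) (hβ : 0 < β) (hγ : γ ≠ 0) (hcop : Nat.Coprime β γ.natAbs)
    (hratio : b * (γ : ℝ) = c * (β : ℝ))
    (i e : ℕ) (he : 2 * (e : ℤ) = (2 * (β : ℤ) + γ) * (i : ℤ)) :
    ∀ f : MvPolynomial (Fin 3) ℝ,
      pbr (C (2*b+c) * (X 0 * X 2)) (C (2*b+c) * (X 1 * X 2))
        (C b * (X 0 ^ 2 + X 1 ^ 2) + C s * X 2 ^ 2)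
        ((X 0 ^ 2 + X 1 ^ 2 + C (s / (3 * b + c)) * X 2 ^ 2) ^ e * X 2 ^ (β * i)) f
      = 0 := by
  set d : ℝ := s / (3 * b + c) with hd_def
  -- Case i = 0
  rcases Nat.eq_zero_or_pos i with hi | hi
  · subst hi
    have he0 : e = 0 := by omega
    subst he0
    intro f
    simp [pbr]
  -- Case i ≥ 1 : then e ≥ 1 and β*i ≥ 1
  have hbc' : (2 : ℝ) * b + c ≠ 0 := by
    intro h; rw [h] at hbc; simp at hbc
  have he1 : 1 ≤ e := by
    by_contra h
    have he0 : e = 0 := by omega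
    subst he0
    have hz : (2 * (β : ℤ) + γ) * (i : ℤ) = 0 := by push_cast at he; linarith
    have hiz : (i : ℤ) ≠ 0 := by exact_mod_cast Nat.pos_iff_ne_zero.mp hi
    have hsum : (2 * (β : ℤ) + γ) = 0 := by
      rcases mul_eq_zero.mp hz with h1 | h1
      · exact h1
      · exact absurd h1 hiz
    have hγ2 : (γ : ℝ) = -2 * (β : ℝ) := by
      have hgz : γ = -2 * (β : ℤ) := by linarith [hsum]
      exact_mod_cast congrArg (Int.cast : ℤ → ℝ) hgz
    rw [hγ2] at hratio
    have hβ' : (0:ℝ) < β := by exact_mod_cast hβ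
    have hzero : (2*b + c) * (β:ℝ) = 0 := by linarith [hratio]
    rcases mul_eq_zero.mp hzero with h1 | h1
    · exact hbc' h1
    · linarith
  obtain ⟨e', rfl⟩ : ∃ e', e = e' + 1 := ⟨e - 1, by omega⟩
  obtain ⟨m, hm⟩ : ∃ m, β * i = m + 1 := by
    have h1 : 1 ≤ β * i := Nat.one_le_iff_ne_zero.mpr (Nat.mul_ne_zero (by omega) (by omega))
    exact ⟨β * i - 1, by omega⟩
  rw [hm]
  -- key scalar identity
  have hkeyR : (2*b+c) * ((m:ℝ)+1) = 2*((e':ℝ)+1)*b := by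
    have h1 : (2 * ((e':ℝ)+1)) = (2*(β:ℝ) + (γ:ℝ)) * (i:ℝ) := by exact_mod_cast congrArg (Int.cast : ℤ → ℝ) he
    have h2 : ((m:ℝ)+1) = (β:ℝ) * (i:ℝ) := by exact_mod_cast (congrArg (Nat.cast : ℕ → ℝ) hm).symm
    rw [h2]; linear_combination (-b) * h1 + (-(i:ℝ)) * hratio
  have hdS : d * (3*b+c) = s := div_mul_cancel₀ s h3bc
  -- polynomial versions
  have hS : (C s : MvPolynomial (Fin 3) ℝ) = C d * (3 * C b + C c) := by
    rw [← hdS]; simp [C_mul, C_add, map_ofNat]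
  have hKbc : (C (2*b+c) : MvPolynomial (Fin 3) ℝ) = 2 * C b + C c := by
    simp [C_add, C_mul, map_ofNat]
  have hK : ((2 * C b + C c : MvPolynomial (Fin 3) ℝ)) * (C ((m:ℝ)) + 1) = 2*(C ((e':ℝ)) + 1)*(C b) := by
    have h0 : ((2 * C b + C c : MvPolynomial (Fin 3) ℝ)) * (C ((m:ℝ)+1)) = 2*(C ((e':ℝ)+1))*(C b) := by
      rw [← hKbc, ← C_mul, hkeyR]; simp [C_mul, C_add, map_ofNat, map_one]
    simpa [C_add, C_1] using h0
  have d20 : pderiv (2 : Fin 3) (X 0 ^ 2 : MvPolynomial (Fin 3) ℝ) = 0 := by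
    simp [pderiv_pow, pderiv_X_of_ne (show (0:Fin 3) ≠ 2 by decide)]
  have d21 : pderiv (2 : Fin 3) (X 1 ^ 2 : MvPolynomial (Fin 3) ℝ) = 0 := by
    simp [pderiv_pow, pderiv_X_of_ne (show (1:Fin 3) ≠ 2 by decide)]
  have d10 : pderiv (1 : Fin 3) (X 0 ^ 2 : MvPolynomial (Fin 3) ℝ) = 0 := by
    simp [pderiv_pow, pderiv_X_of_ne (show (0:Fin 3) ≠ 1 by decide)]
  have d00 : pderiv (0 : Fin 3) (X 0 ^ 2 : MvPolynomial (Fin 3) ℝ) = C 2 * X 0 := by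
    simp [pderiv_pow]; ring_nf; simp [map_ofNat]
  have d11 : pderiv (1 : Fin 3) (X 1 ^ 2 : MvPolynomial (Fin 3) ℝ) = C 2 * X 1 := by
    simp [pderiv_pow]; ring_nf; simp [map_ofNat]
  have d01 : pderiv (0 : Fin 3) (X 1 ^ 2 : MvPolynomial (Fin 3) ℝ) = 0 := by
    simp [pderiv_pow, pderiv_X_of_ne (show (1:Fin 3) ≠ 0 by decide)]
  have d12 : pderiv (1 : Fin 3) (X 2 ^ 2 : MvPolynomial (Fin 3) ℝ) = 0 := by
    simp [pderiv_pow, pderiv_X_of_ne (show (2:Fin 3) ≠ 1 by decide)]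
  have d02 : pderiv (0 : Fin 3) (X 2 ^ 2 : MvPolynomial (Fin 3) ℝ) = 0 := by
    simp [pderiv_pow, pderiv_X_of_ne (show (2:Fin 3) ≠ 0 by decide)]
  have d22 : pderiv (2 : Fin 3) (X 2 ^ 2 : MvPolynomial (Fin 3) ℝ) = C 2 * X 2 := by
    simp [pderiv_pow]; ring_nf; simp [map_ofNat]
  have dz1 : pderiv (1 : Fin 3) (X 2 : MvPolynomial (Fin 3) ℝ) = 0 := pderiv_X_of_ne (by decide)
  have dz0 : pderiv (0 : Fin 3) (X 2 : MvPolynomial (Fin 3) ℝ) = 0 := pderiv_X_of_ne (by decide)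
  have dy2 : pderiv (2 : Fin 3) (X 1 : MvPolynomial (Fin 3) ℝ) = 0 := pderiv_X_of_ne (by decide)
  apply casimir_of
  · rw [hS, hKbc]
    simp only [pderiv_mul, pderiv_pow_succ, map_add, pderiv_C_mul, pderiv_C, pderiv_X_self, C_add, C_1, map_ofNat,
      d20, d21, d10, d11, d12, d22, dz1, dy2]
    linear_combination (X 1 * X 2^(m+1) * (X 0^2 + X 1^2 + C d * X 2^2)^(e'+1)) * hK
  · rw [hS, hKbc]
    simp only [pderiv_mul, pderiv_pow_succ, map_add, pderiv_C_mul, pderiv_C, pderiv_X_self, C_add, C_1, map_ofNat,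
      d20, d21, d00, d01, d02, d22, dz0]
    linear_combination (-(X 0 * X 2^(m+1) * (X 0^2 + X 1^2 + C d * X 2^2)^(e'+1))) * hK
  · simp only [pderiv_mul, pderiv_pow_succ, map_add, pderiv_C_mul, pderiv_C, pderiv_X_self, C_add, C_1, map_ofNat,
      d10, d11, d00, d01, d02, d12, dz0, dz1]
    ring
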